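/- At the fixed point (2,3) of the planar system dz1/dt = 10 z1 (288 (z1^2 - 1) + (512 - 768 z1 + 256 z1^2) z2 - 96 z2^2), dz2/dt = 640 z2 (-3 + 12 z1 + 2 (z1 - 6) z1 z2 + 3 z2^2), the Jacobian matrix has positive trace and positive determinant with real eigenvalues, hence (2,3) is a repelling node. -/

import Mathlib

lemma cubic_hasDerivAt (a3 a2 a1 a0 x : ℝ) :
    HasDerivAt (fun t : ℝ => a3 * t ^ 3 + a2 * t ^ 2 + a1 * t + a0)
      (3 * a3 * x ^ 2 + 2 * a2 * x + a1) x := by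
  have h := ((((hasDerivAt_pow 3 x).const_mul a3).add
      ((hasDerivAt_pow 2 x).const_mul a2)).add
      ((hasDerivAt_id x).const_mul a1)).add (hasDerivAt_const x a0)
  convert h using 1
  all_goals first | rfl | (push_cast; ring)

/-- At the fixed point (2,3), the Jacobian of the planar system has positive
trace, positive determinant, and nonnegative discriminant (real eigenvalues),
hence (2,3) is a repelling node. -/
theorem stmt_15 :
    let F1 := fun z1 z2 : ℝ =>
      10 * z1 * (288 * (z1 ^ 2 - 1) + (512 - 768 * z1 + 256 * z1 ^ 2) * z2 -
        96 * z2 ^ 2)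
    let F2 := fun z1 z2 : ℝ =>
      640 * z2 * (-3 + 12 * z1 + 2 * (z1 - 6) * z1 * z2 + 3 * z2 ^ 2)
    let a := deriv (fun z1 => F1 z1 3) 2
    let b := deriv (fun z2 => F1 2 z2) 3
    let c := deriv (fun z1 => F2 z1 3) 2
    let d := deriv (fun z2 => F2 2 z2) 3
    0 < a + d ∧ 0 < a * d - b * c ∧ 0 ≤ (a + d) ^ 2 - 4 * (a * d - b * c) := by
  intro F1 F2 a b c d
  have ha : a = 38400 := by
    show deriv (fun z1 => F1 z1 3) 2 = 38400
    have heq : (fun z1 => F1 z1 3) =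
        fun t : ℝ => 10560 * t ^ 3 + (-23040) * t ^ 2 + 3840 * t + 0 := by
      funext t; simp only [F1]; ring
    rw [heq, (cubic_hasDerivAt 10560 (-23040) 3840 0 2).deriv]; norm_num
  have hb : b = -11520 := by
    show deriv (fun z2 => F1 2 z2) 3 = -11520
    have heq : (fun z2 => F1 2 z2) =
        fun t : ℝ => 0 * t ^ 3 + (-1920) * t ^ 2 + 0 * t + 17280 := by
      funext t; simp only [F1]; ring
    rw [heq, (cubic_hasDerivAt 0 (-1920) 0 17280 3).deriv]; norm_num
  have hc : c = 0 := by
    show deriv (fun z1 => F2 z1 3) 2 = 0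
    have heq : (fun z1 => F2 z1 3) =
        fun t : ℝ => 0 * t ^ 3 + 11520 * t ^ 2 + (-46080) * t + 46080 := by
      funext t; simp only [F2]; ring
    rw [heq, (cubic_hasDerivAt 0 11520 (-46080) 46080 2).deriv]; norm_num
  have hd : d = 3840 := by
    show deriv (fun z2 => F2 2 z2) 3 = 3840
    have heq : (fun z2 => F2 2 z2) =
        fun t : ℝ => 1920 * t ^ 3 + (-10240) * t ^ 2 + 13440 * t + 0 := by
      funext t; simp only [F2]; ring
    rw [heq, (cubic_hasDerivAt 1920 (-10240) 13440 0 3).deriv]; norm_num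
  rw [ha, hb, hc, hd]
  norm_num
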